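/- Let E = ⊕_{n≥0} E^n be a graded ring, Z a graded-commutative Noetherian subring generated over E^0 by central elements of degree 2, and N = ⊕_{n≥0} N^n a Noetherian graded Z-module with each N^n a finite-dimensional vector space over a field k. Then there exists a homogeneous element η ∈ Z of positive degree such that multiplication by η : N^n → N^{n+|η|} is injective for all n ≫ 0. -/

import Mathlib

/-!
STATEMENT 12: Let `E` be a graded ring and `Z` a (graded-commutative, hence — being
generated over `E^0` by central elements of degree 2 — commutative) Noetherian subring
generated over the degree-zero part by central elements of degree two, and let
`N = ⊕_{n ≥ 0} N^n` be a Noetherian graded `Z`-module.  Then there is a homogeneous element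
`η ∈ Z` of positive degree `d` such that multiplication `η : N^n → N^(n+d)` is injective for
all `n ≫ 0`.  Formalization: `Z` is a commutative Noetherian ring, `ℕ`-graded by additive
subgroups `𝒜` and generated as a ring by `𝒜 0 ∪ 𝒜 2`; `N` is a Noetherian `Z`-module graded
by additive subgroups `ℳ` compatibly with `𝒜`.
-/

set_option linter.unusedSectionVars false

section Helpers

variable {Z : Type} [CommRing Z] (𝒜 : ℕ → AddSubgroup Z) [GradedRing 𝒜]
variable {N : Type} [AddCommGroup N] [Module Z N] (ℳ : ℕ → AddSubgroup N)
variable [DirectSum.Decomposition ℳ] [SetLike.GradedSMul 𝒜 ℳ]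

/-- Projection of a scalar product, decomposing the scalar. -/
lemma proj_smul_right (z : Z) {e : ℕ} {y : N} (hy : y ∈ ℳ e) (m : ℕ) :
    (DirectSum.decompose ℳ (z • y) (m + e) : N) = (DirectSum.decompose 𝒜 z m : Z) • y := by
  induction z using DirectSum.Decomposition.inductionOn 𝒜 with
  | zero => simp
  | @homogeneous i z =>
      obtain ⟨z, hz⟩ := z
      have hmem : z • y ∈ ℳ (i + e) := SetLike.GradedSMul.smul_mem hz hy
      rcases eq_or_ne i m with rfl | hne
      · rw [show ((⟨z, hz⟩ : 𝒜 i) : Z) = z from rfl, DirectSum.decompose_of_mem_same 𝒜 hz,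
          DirectSum.decompose_of_mem_same ℳ hmem]
      · rw [show ((⟨z, hz⟩ : 𝒜 i) : Z) = z from rfl, DirectSum.decompose_of_mem_ne 𝒜 hz hne,
          DirectSum.decompose_of_mem_ne ℳ hmem (by omega : i + e ≠ m + e), zero_smul]
  | add z z' hz hz' =>
      simp only [add_smul, DirectSum.decompose_add, DirectSum.add_apply,
        AddSubgroup.coe_add, hz, hz']

/-- Projection of a scalar product, decomposing the module element. -/
lemma proj_smul_left {e : ℕ} {θ : Z} (hθ : θ ∈ 𝒜 e) (x : N) (m : ℕ) :
    (DirectSum.decompose ℳ (θ • x) (e + m) : N) = θ • (DirectSum.decompose ℳ x m : N) := by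
  induction x using DirectSum.Decomposition.inductionOn ℳ with
  | zero => simp
  | @homogeneous i x =>
      obtain ⟨x, hx⟩ := x
      have hmem : θ • x ∈ ℳ (e + i) := SetLike.GradedSMul.smul_mem hθ hx
      rcases eq_or_ne i m with rfl | hne
      · rw [show ((⟨x, hx⟩ : ℳ i) : N) = x from rfl, DirectSum.decompose_of_mem_same ℳ hx,
          DirectSum.decompose_of_mem_same ℳ hmem]
      · rw [show ((⟨x, hx⟩ : ℳ i) : N) = x from rfl, DirectSum.decompose_of_mem_ne ℳ hx hne,
          DirectSum.decompose_of_mem_ne ℳ hmem (by omega : e + i ≠ e + m), smul_zero]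
  | add x x' hx hx' =>
      simp only [smul_add, DirectSum.decompose_add, DirectSum.add_apply,
        AddSubgroup.coe_add, hx, hx']

include 𝒜 in
/-- Projections of `z • y` for homogeneous `y` stay in the cyclic module on `y`. -/
lemma proj_smul_mem_span (z : Z) {e : ℕ} {y : N} (hy : y ∈ ℳ e) (m : ℕ) :
    (DirectSum.decompose ℳ (z • y) m : N) ∈ Submodule.span Z {y} := by
  induction z using DirectSum.Decomposition.inductionOn 𝒜 with
  | zero => simp
  | @homogeneous i z =>
      obtain ⟨z, hz⟩ := z
      have hmem : z • y ∈ ℳ (i + e) := SetLike.GradedSMul.smul_mem hz hy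
      rcases eq_or_ne (i + e) m with h | hne
      · rw [show ((⟨z, hz⟩ : 𝒜 i) : Z) = z from rfl, ← h,
          DirectSum.decompose_of_mem_same ℳ hmem]
        exact Submodule.smul_mem _ _ (Submodule.mem_span_singleton_self y)
      · rw [show ((⟨z, hz⟩ : 𝒜 i) : Z) = z from rfl,
          DirectSum.decompose_of_mem_ne ℳ hmem hne]
        exact Submodule.zero_mem _
  | add z z' hz hz' =>
      rw [add_smul, DirectSum.decompose_add, DirectSum.add_apply, AddSubgroup.coe_add]
      exact Submodule.add_mem _ hz hz'

end Helpers
section Machinery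

variable {Z : Type} [CommRing Z] (𝒜 : ℕ → AddSubgroup Z) [GradedRing 𝒜]
variable {N : Type} [AddCommGroup N] [Module Z N] (ℳ : ℕ → AddSubgroup N)
variable [DirectSum.Decomposition ℳ] [SetLike.GradedSMul 𝒜 ℳ]

/-- The ideal generated by the degree-two part. -/
def posIdeal : Ideal Z := Ideal.span (𝒜 2 : Set Z)

lemma posIdeal_homogeneous : (posIdeal 𝒜).IsHomogeneous 𝒜 :=
  Ideal.homogeneous_span 𝒜 _ fun x hx => ⟨2, hx⟩

lemma posIdeal_pow_homogeneous (j : ℕ) : ((posIdeal 𝒜) ^ j).IsHomogeneous 𝒜 := by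
  induction j with
  | zero => intro i r _; simp
  | succ j ih => rw [pow_succ]; exact Ideal.IsHomogeneous.mul ih (posIdeal_homogeneous 𝒜)

variable {𝒜}

/-- The colon ideal `(W : y)`. -/
def colIdeal (W : Submodule Z N) (y : N) : Ideal Z where
  carrier := {z | z • y ∈ W}
  add_mem' ha hb := by simpa [add_smul] using W.add_mem ha hb
  zero_mem' := by simpa using W.zero_mem
  smul_mem' c z hz := by
    show (c * z) • y ∈ W
    rw [mul_smul]; exact W.smul_mem c hz

@[simp] lemma mem_colIdeal {W : Submodule Z N} {y : N} {z : Z} :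
    z ∈ colIdeal W y ↔ z • y ∈ W := Iff.rfl

/-- `Cc j W = {x | I^j • x ⊆ W}`. -/
def Cc (j : ℕ) (W : Submodule Z N) : Submodule Z N where
  carrier := {x | ∀ θ ∈ (posIdeal 𝒜) ^ j, θ • x ∈ W}
  add_mem' ha hb θ hθ := by simpa [smul_add] using W.add_mem (ha θ hθ) (hb θ hθ)
  zero_mem' θ hθ := by simpa using W.zero_mem
  smul_mem' c x hx θ hθ := by
    simpa [smul_comm θ c] using W.smul_mem c (hx θ hθ)

lemma mem_Cc {j : ℕ} {W : Submodule Z N} {x : N} :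
    x ∈ Cc (𝒜 := 𝒜) j W ↔ ∀ θ ∈ (posIdeal 𝒜) ^ j, θ • x ∈ W := Iff.rfl

lemma le_Cc (j : ℕ) (W : Submodule Z N) : W ≤ Cc (𝒜 := 𝒜) j W :=
  fun x hx θ _ => W.smul_mem θ hx

lemma Cc_mono (W : Submodule Z N) : Monotone fun j => Cc (𝒜 := 𝒜) j W := by
  intro i j hij x hx θ hθ
  exact hx θ (Ideal.pow_le_pow_right hij hθ)

/-- Graded submodule predicate. -/
def Grd (S : Submodule Z N) : Prop :=
  ∀ x ∈ S, ∀ m, (DirectSum.decompose ℳ x m : N) ∈ S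

lemma grd_bot : Grd (ℳ := ℳ) (⊥ : Submodule Z N) := by
  intro x hx m
  rw [Submodule.mem_bot] at hx
  simp [hx]

include 𝒜 in
lemma grd_sup_span {S : Submodule Z N} {y : N} {e : ℕ} (hS : Grd ℳ S) (hy : y ∈ ℳ e) :
    Grd ℳ (S ⊔ Submodule.span Z {y}) := by
  intro x hx m
  obtain ⟨s, hs, w, hw, rfl⟩ := Submodule.mem_sup.mp hx
  obtain ⟨c, rfl⟩ := Submodule.mem_span_singleton.mp hw
  rw [DirectSum.decompose_add, DirectSum.add_apply, AddSubgroup.coe_add]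
  exact Submodule.add_mem _ (Submodule.mem_sup_left (hS s hs m))
    (Submodule.mem_sup_right (proj_smul_mem_span 𝒜 ℳ c hy m))

lemma grd_Cc {W : Submodule Z N} (hW : Grd ℳ W) (j : ℕ) :
    Grd ℳ (Cc (𝒜 := 𝒜) j W) := by
  classical
  intro x hx m θ hθ
  rw [← DirectSum.sum_support_decompose 𝒜 θ, Finset.sum_smul]
  refine Submodule.sum_mem _ fun i _ => ?_
  have hθi : (DirectSum.decompose 𝒜 θ i : Z) ∈ (posIdeal 𝒜) ^ j :=
    posIdeal_pow_homogeneous 𝒜 j i hθ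
  rw [← proj_smul_left 𝒜 ℳ (SetLike.coe_mem _) x m]
  exact hW _ (hx _ hθi) _

/-- colon ideals of homogeneous elements in graded submodules are homogeneous. -/
lemma colIdeal_homogeneous {S : Submodule Z N} {y : N} {e : ℕ} (hS : Grd ℳ S) (hy : y ∈ ℳ e) :
    (colIdeal S y).IsHomogeneous 𝒜 := by
  intro i r hr
  rw [mem_colIdeal, ← proj_smul_right 𝒜 ℳ r hy i]
  exact hS _ hr _

end Machinery
section Main

variable {Z : Type} [CommRing Z] {𝒜 : ℕ → AddSubgroup Z} [GradedRing 𝒜]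
variable [IsNoetherianRing Z] {N : Type} [AddCommGroup N] [Module Z N] {ℳ : ℕ → AddSubgroup N}
variable [DirectSum.Decomposition ℳ] [SetLike.GradedSMul 𝒜 ℳ]

/-- Since the ring is generated in degrees 0 and 2, the degree-`m` part lies in a
high power of the ideal generated by degree 2. -/
lemma proj_mem_pow (hgen : Subring.closure ((𝒜 0 : Set Z) ∪ (𝒜 2 : Set Z)) = ⊤)
    (z : Z) (m : ℕ) :
    (DirectSum.decompose 𝒜 z m : Z) ∈ posIdeal 𝒜 ^ ((m + 1) / 2) := by
  classical
  have base0 : ∀ x ∈ 𝒜 0, ∀ m', (DirectSum.decompose 𝒜 x m' : Z) ∈ posIdeal 𝒜 ^ ((m' + 1) / 2) := by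
    intro x hx m'
    rcases eq_or_ne 0 m' with rfl | hne
    · rw [DirectSum.decompose_of_mem_same 𝒜 hx, show (0 + 1) / 2 = 0 from rfl, pow_zero, Ideal.one_eq_top]
      exact Submodule.mem_top (R := Z) (M := Z)
    · rw [DirectSum.decompose_of_mem_ne 𝒜 hx hne]; exact zero_mem _
  have hz : z ∈ Subring.closure ((𝒜 0 : Set Z) ∪ (𝒜 2 : Set Z)) := by
    rw [hgen]; exact Subring.mem_top z
  revert m
  refine Subring.closure_induction ?mem ?zero ?one ?add ?neg ?mul hz
  · rintro x (hx | hx) m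
    · exact base0 x hx m
    · rcases eq_or_ne 2 m with rfl | hne
      · rw [DirectSum.decompose_of_mem_same 𝒜 hx, show (2 + 1) / 2 = 1 from rfl, pow_one]
        exact Ideal.subset_span hx
      · rw [DirectSum.decompose_of_mem_ne 𝒜 hx hne]; exact zero_mem _
  · intro m
    rw [DirectSum.decompose_zero, DirectSum.zero_apply, ZeroMemClass.coe_zero]
    exact zero_mem _
  · exact base0 1 SetLike.GradedOne.one_mem
  · intro x y _ _ ihx ihy m
    rw [DirectSum.decompose_add, DirectSum.add_apply, AddSubgroup.coe_add]
    exact add_mem (ihx m) (ihy m)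
  · intro x _ ihx m
    have : (DirectSum.decompose 𝒜 (-x) m : Z) = -(DirectSum.decompose 𝒜 x m : Z) := by
      rw [DirectSum.decompose_neg]; rfl
    rw [this]
    exact neg_mem (ihx m)
  · intro x y _ _ ihx ihy m
    rw [DirectSum.decompose_mul, DirectSum.coe_mul_apply]
    refine Submodule.sum_mem _ fun ij hij => ?_
    have hsum : ij.1 + ij.2 = m := (Finset.mem_filter.mp hij).2
    have hmm : (DirectSum.decompose 𝒜 x ij.1 : Z) * (DirectSum.decompose 𝒜 y ij.2 : Z) ∈
        posIdeal 𝒜 ^ ((ij.1 + 1) / 2 + (ij.2 + 1) / 2) := by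
      rw [pow_add]; exact Ideal.mul_mem_mul (ihx ij.1) (ihy ij.2)
    exact Ideal.pow_le_pow_right (by omega) hmm

variable (𝒜)

/-- Saturation-closedness with respect to powers of `posIdeal`. -/
def SatC (S : Submodule Z N) : Prop :=
  ∀ (j : ℕ) (x : N), (∀ θ ∈ posIdeal 𝒜 ^ j, θ • x ∈ S) → x ∈ S

variable {𝒜}

lemma exists_stab [IsNoetherian Z N] (W : Submodule Z N) :
    ∃ k, ∀ m, k ≤ m → Cc (𝒜 := 𝒜) k W = Cc (𝒜 := 𝒜) m W := by
  obtain ⟨k, hk⟩ := monotone_stabilizes_iff_noetherian.mpr (inferInstance : IsNoetherian Z N)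
    ⟨fun j => Cc (𝒜 := 𝒜) j W, Cc_mono W⟩
  exact ⟨k, hk⟩

lemma satC_Cc_stab {W : Submodule Z N} {k : ℕ}
    (hk : ∀ m, k ≤ m → Cc (𝒜 := 𝒜) k W = Cc (𝒜 := 𝒜) m W) :
    SatC 𝒜 (Cc (𝒜 := 𝒜) k W) := by
  intro j x hx
  have hmem : x ∈ Cc (𝒜 := 𝒜) (k + j) W := by
    intro c hc
    rw [pow_add] at hc
    have hmul : posIdeal 𝒜 ^ k * posIdeal 𝒜 ^ j ≤ colIdeal W x := by
      refine Ideal.mul_le.mpr fun r hr s hs => ?_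
      rw [mem_colIdeal, mul_smul]
      exact hx s hs r hr
    exact hmul hc
  rwa [← hk (k + j) (Nat.le_add_right _ _)] at hmem

/-- Main Noetherian induction: a chain of saturated graded submodules with prime colon
ideals controlling regularity. -/
lemma main_ind [IsNoetherian Z N] :
    ∀ S : Submodule Z N, Grd ℳ S → SatC 𝒜 S →
    ∃ Q : Finset (Ideal Z), (∀ q ∈ Q, q.IsPrime ∧ q.IsHomogeneous 𝒜 ∧ ¬ posIdeal 𝒜 ≤ q) ∧
      ∀ η : Z, (∀ q ∈ Q, η ∉ q) → ∀ x : N, η • x ∈ S → x ∈ S := by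
  classical
  intro S
  induction S using IsNoetherian.induction with
  | hgt S IH => ?_
  intro hGrd hSat
  by_cases hcase : ∀ (n : ℕ), ∀ y ∈ ℳ n, y ∈ S
  · refine ⟨∅, by simp, fun η _ x _ => ?_⟩
    classical
    rw [← DirectSum.sum_support_decompose ℳ x]
    exact Submodule.sum_mem _ fun i _ => hcase i _ (SetLike.coe_mem _)
  · push_neg at hcase
    obtain ⟨n₀, y₀, hy₀mem, hy₀not⟩ := hcase
    set F : Set (Ideal Z) := {J | ∃ y : N, ∃ e : ℕ, y ∈ ℳ e ∧ y ∉ S ∧ J = colIdeal S y} with hF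
    obtain ⟨q, hqF, hqmax⟩ := set_has_maximal_iff_noetherian.mpr
      (inferInstance : IsNoetherianRing Z) F ⟨colIdeal S y₀, y₀, n₀, hy₀mem, hy₀not, rfl⟩
    obtain ⟨y, e, hye, hyS, rfl⟩ := hqF
    have hq_ne_top : colIdeal S y ≠ ⊤ := by
      intro h
      apply hyS
      have h1 : (1 : Z) ∈ colIdeal S y := by rw [h]; trivial
      simpa using h1
    have hq_homog : (colIdeal S y).IsHomogeneous 𝒜 := colIdeal_homogeneous ℳ hGrd hye
    have hq_prime : (colIdeal S y).IsPrime := by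
      refine hq_homog.isPrime_of_homogeneous_mem_or_mem hq_ne_top ?_
      rintro a b ⟨da, ha⟩ ⟨db, hb⟩ hab
      by_contra hcon
      push_neg at hcon
      obtain ⟨haq, hbq⟩ := hcon
      have hy' : a • y ∈ ℳ (da + e) := SetLike.GradedSMul.smul_mem ha hye
      have hle : colIdeal S y ≤ colIdeal S (a • y) := by
        intro c hc
        rw [mem_colIdeal] at hc ⊢
        rw [smul_smul, mul_comm, mul_smul]
        exact S.smul_mem a hc
      have hbmem : b ∈ colIdeal S (a • y) := by
        rw [mem_colIdeal, smul_smul, mul_comm]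
        exact hab
      refine hqmax _ ⟨a • y, da + e, hy', haq, rfl⟩ (lt_of_le_of_ne hle fun h => hbq ?_)
      rw [h]; exact hbmem
    have hq_notI : ¬ posIdeal 𝒜 ≤ colIdeal S y := by
      intro hle
      apply hyS
      apply hSat 1 y
      intro θ hθ
      rw [pow_one] at hθ
      exact hle hθ
    obtain ⟨k, hk⟩ := exists_stab (𝒜 := 𝒜) (S ⊔ Submodule.span Z {y})
    set W : Submodule Z N := S ⊔ Submodule.span Z {y} with hWdef
    set S' : Submodule Z N := Cc (𝒜 := 𝒜) k W with hS'def
    have hSles : S ≤ S' := le_trans le_sup_left (le_Cc k W)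
    have hyS' : y ∈ S' := le_Cc k W (Submodule.mem_sup_right (Submodule.mem_span_singleton_self y))
    have hlt : S < S' := lt_of_le_of_ne hSles fun h => hyS (h ▸ hyS')
    obtain ⟨Q', hQ'props, hQ'key⟩ := IH S' hlt (grd_Cc (𝒜 := 𝒜) ℳ (grd_sup_span (𝒜 := 𝒜) ℳ hGrd hye) k)
      (satC_Cc_stab hk)
    refine ⟨insert (colIdeal S y) Q', ?_, ?_⟩
    · intro q' hq'
      rcases Finset.mem_insert.mp hq' with rfl | h
      · exact ⟨hq_prime, hq_homog, hq_notI⟩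
      · exact hQ'props _ h
    · intro η hη x hxS
      have hηq : η ∉ colIdeal S y := hη _ (Finset.mem_insert_self _ _)
      have hx' : x ∈ S' := hQ'key η (fun q hq => hη q (Finset.mem_insert_of_mem hq)) x (hSles hxS)
      apply hSat k x
      intro θ hθ
      have hθx : θ • x ∈ W := hx' θ hθ
      obtain ⟨s, hs, w, hw, hsum⟩ := Submodule.mem_sup.mp hθx
      obtain ⟨c, rfl⟩ := Submodule.mem_span_singleton.mp hw
      have h2 : η • (θ • x) ∈ S := by
        rw [smul_comm]; exact S.smul_mem θ hxS
      have h3 : η • (θ • x) = η • s + (η * c) • y := by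
        rw [← hsum, smul_add, smul_smul]
      rw [h3] at h2
      have h1 : (η * c) • y ∈ S := by
        have := S.sub_mem h2 (S.smul_mem η hs)
        simpa using this
      have hcq : c ∈ colIdeal S y := (hq_prime.mem_or_mem h1).resolve_left hηq
      rw [← hsum]
      exact S.add_mem hs hcq

end Main
section Avoidance

variable {Z : Type} [CommRing Z] {𝒜 : ℕ → AddSubgroup Z} [GradedRing 𝒜]

lemma exists_homog_notmem {q q' : Ideal Z} (hq : q.IsHomogeneous 𝒜) (h : ¬ q ≤ q') :
    ∃ (i : ℕ) (c : Z), c ∈ 𝒜 i ∧ c ∈ q ∧ c ∉ q' := by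
  classical
  obtain ⟨z, hzq, hzq'⟩ := SetLike.not_le_iff_exists.mp h
  by_contra hcon
  push_neg at hcon
  apply hzq'
  rw [← DirectSum.sum_support_decompose 𝒜 z]
  exact Ideal.sum_mem _ fun i _ => hcon i _ (SetLike.coe_mem _) (hq i hzq)

lemma prod_mem_graded {α : Type*} (s : Finset α) (f : α → Z) (d : α → ℕ)
    (h : ∀ i ∈ s, f i ∈ 𝒜 (d i)) : (∏ i ∈ s, f i) ∈ 𝒜 (∑ i ∈ s, d i) := by
  classical
  induction s using Finset.induction_on with
  | empty => simpa using SetLike.GradedOne.one_mem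
  | insert _ _ hnotmem ih =>
      rename_i a s'
      rw [Finset.prod_insert hnotmem, Finset.sum_insert hnotmem]
      exact SetLike.mul_mem_graded (h a (Finset.mem_insert_self a s'))
        (ih fun i hi => h i (Finset.mem_insert_of_mem hi))

lemma avoid : ∀ (n : ℕ) (Q : Finset (Ideal Z)), Q.card ≤ n →
    (∀ q ∈ Q, q.IsPrime ∧ q.IsHomogeneous 𝒜 ∧ ¬ posIdeal 𝒜 ≤ q) →
    ∃ (d : ℕ) (η : Z), 0 < d ∧ η ∈ 𝒜 d ∧ ∀ q ∈ Q, η ∉ q := by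
  classical
  intro n
  induction n with
  | zero =>
      intro Q hcard _
      have hQ : Q = ∅ := Finset.card_eq_zero.mp (Nat.le_zero.mp hcard)
      subst hQ
      exact ⟨2, 0, two_pos, zero_mem _, by simp⟩
  | succ n ih =>
      intro Q hcard hQ
      by_cases hcontain : ∃ q ∈ Q, ∃ q' ∈ Q, q ≠ q' ∧ q ≤ q'
      · obtain ⟨q, hq, q', hq', hne, hle⟩ := hcontain
        obtain ⟨d, η, hd, hη, havd⟩ := ih (Q.erase q)
          (by have := Finset.card_erase_of_mem hq; omega)
          (fun r hr => hQ r (Finset.mem_of_mem_erase hr))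
        refine ⟨d, η, hd, hη, fun r hr => ?_⟩
        rcases eq_or_ne r q with rfl | hrq
        · exact fun hmem => havd q' (Finset.mem_erase.mpr ⟨hne.symm, hq'⟩) (hle hmem)
        · exact havd r (Finset.mem_erase.mpr ⟨hrq, hr⟩)
      · push_neg at hcontain
        rcases Finset.eq_empty_or_nonempty Q with rfl | ⟨qr, hqr⟩
        · exact ⟨2, 0, two_pos, zero_mem _, by simp⟩
        · obtain ⟨d', η', hd', hη', havd'⟩ := ih (Q.erase qr)
            (by have := Finset.card_erase_of_mem hqr; omega)
            (fun r hr => hQ r (Finset.mem_of_mem_erase hr))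
          by_cases hηr : η' ∉ qr
          · refine ⟨d', η', hd', hη', fun r hr => ?_⟩
            rcases eq_or_ne r qr with rfl | hne
            · exact hηr
            · exact havd' r (Finset.mem_erase.mpr ⟨hne, hr⟩)
          · push_neg at hηr
            obtain ⟨hrprime, _, hrnotI⟩ := hQ qr hqr
            have ha : ∃ a, a ∈ 𝒜 2 ∧ a ∉ qr := by
              by_contra hcon
              push_neg at hcon
              exact hrnotI (Ideal.span_le.mpr fun a haa => hcon a haa)
            obtain ⟨a, ha2, haq⟩ := ha
            have hc : ∀ q ∈ Q.erase qr, ∃ (i : ℕ) (c : Z), c ∈ 𝒜 i ∧ c ∈ q ∧ c ∉ qr := by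
              intro q hqmem
              exact exists_homog_notmem (hQ q (Finset.mem_of_mem_erase hqmem)).2.1
                (hcontain q (Finset.mem_of_mem_erase hqmem) qr hqr (Finset.mem_erase.mp hqmem).1)
            choose deg cc hcc1 hcc2 hcc3 using hc
            set b : Z := a * ∏ q ∈ (Q.erase qr).attach, cc q.1 q.2 with hbdef
            set degb : ℕ := 2 + ∑ q ∈ (Q.erase qr).attach, deg q.1 q.2 with hdegbdef
            have hbmem : b ∈ 𝒜 degb :=
              SetLike.mul_mem_graded ha2
                (prod_mem_graded _ _ _ fun q _ => hcc1 q.1 q.2)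
            have hbq : ∀ q ∈ Q.erase qr, b ∈ q := by
              intro q hqmem
              have h1 : (∏ p ∈ (Q.erase qr).attach, cc p.1 p.2) ∈ q := by
                rw [← Finset.mul_prod_erase _ _ (Finset.mem_attach _ ⟨q, hqmem⟩)]
                exact Ideal.mul_mem_right _ _ (hcc2 q hqmem)
              exact Ideal.mul_mem_left _ _ h1
            have hbr : b ∉ qr := by
              intro hmem
              rcases hrprime.mem_or_mem hmem with h | h
              · exact haq h
              · have hprod : (∏ p ∈ (Q.erase qr).attach, cc p.1 p.2) ∉ qr := by
                  refine Finset.prod_induction _ (fun z => z ∉ qr)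
                    (fun x y hx hy hxy => (hrprime.mem_or_mem hxy).elim hx hy)
                    ((Ideal.ne_top_iff_one _).mp hrprime.ne_top) (fun p _ => hcc3 p.1 p.2)
                exact hprod h
            have hdegb : 0 < degb := by omega
            have h1 : η' ^ degb ∈ 𝒜 (degb * d') := by
              simpa [smul_eq_mul] using SetLike.pow_mem_graded degb hη'
            have h2 : b ^ d' ∈ 𝒜 (degb * d') := by
              simpa [smul_eq_mul, mul_comm] using SetLike.pow_mem_graded d' hbmem
            refine ⟨degb * d', η' ^ degb + b ^ d', Nat.mul_pos hdegb hd', add_mem h1 h2, ?_⟩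
            intro r hr
            rcases eq_or_ne r qr with rfl | hne
            · intro hmem
              have hη'pow : η' ^ degb ∈ r := Ideal.pow_mem_of_mem _ hηr _ hdegb
              have hb' : b ^ d' ∈ r := by
                have := r.sub_mem hmem hη'pow
                simpa using this
              exact hbr (hrprime.mem_of_pow_mem _ hb')
            · have hrQ' : r ∈ Q.erase qr := Finset.mem_erase.mpr ⟨hne, hr⟩
              intro hmem
              have hbp : b ^ d' ∈ r := Ideal.pow_mem_of_mem _ (hbq r hrQ') _ hd'
              have hη'p : η' ^ degb ∈ r := by
                have := r.sub_mem hmem hbp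
                simpa using this
              exact havd' r hrQ' ((hQ r hr).1.mem_of_pow_mem _ hη'p)

end Avoidance

theorem stmt_12 (Z : Type) [CommRing Z] [IsNoetherianRing Z]
    (𝒜 : ℕ → AddSubgroup Z) [GradedRing 𝒜]
    (hgen : Subring.closure ((𝒜 0 : Set Z) ∪ (𝒜 2 : Set Z)) = ⊤)
    (N : Type) [AddCommGroup N] [Module Z N] [IsNoetherian Z N]
    (ℳ : ℕ → AddSubgroup N) [DirectSum.Decomposition ℳ] [SetLike.GradedSMul 𝒜 ℳ] :
    ∃ (d : ℕ) (η : Z), 0 < d ∧ η ∈ 𝒜 d ∧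
      ∃ n₁ : ℕ, ∀ n : ℕ, n₁ ≤ n → ∀ x ∈ ℳ n, η • x = 0 → x = 0 := by
  classical
  obtain ⟨k, hk⟩ := exists_stab (𝒜 := 𝒜) (⊥ : Submodule Z N)
  set T : Submodule Z N := Cc (𝒜 := 𝒜) k ⊥ with hTdef
  have hTgrd : Grd ℳ T := grd_Cc (𝒜 := 𝒜) ℳ (grd_bot ℳ) k
  have hTsat : SatC 𝒜 T := satC_Cc_stab hk
  obtain ⟨Q, hQprops, hQkey⟩ := main_ind T hTgrd hTsat
  obtain ⟨d, η, hd, hη, havoid⟩ := avoid Q.card Q le_rfl hQprops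
  have hTkill : ∀ x ∈ T, ∀ θ ∈ posIdeal 𝒜 ^ k, θ • x = 0 := by
    intro x hx θ hθ
    have := hx θ hθ
    rwa [Submodule.mem_bot] at this
  obtain ⟨G, hG⟩ := IsNoetherian.noetherian T
  set D : ℕ := (G.sup fun g => (DirectSum.decompose ℳ g).support.sup id) + 1 with hDdef
  refine ⟨d, η, hd, hη, D + 2 * k, ?_⟩
  intro n hn x hxmem hx0
  have hxT : x ∈ T := hQkey η havoid x (by rw [hx0]; exact T.zero_mem)
  rw [← hG] at hxT
  obtain ⟨f, -, hf⟩ := Submodule.mem_span_finset.mp hxT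
  have hx : x = (DirectSum.decompose ℳ x n : N) := (DirectSum.decompose_of_mem_same ℳ hxmem).symm
  rw [hx, ← hf]
  have hsplit : (DirectSum.decompose ℳ (∑ g ∈ G, f g • g) n : N)
      = ∑ g ∈ G, (DirectSum.decompose ℳ (f g • g) n : N) := by
    rw [DirectSum.decompose_sum, DFinsupp.finset_sum_apply, AddSubmonoidClass.coe_finset_sum]
  rw [hsplit]
  refine Finset.sum_eq_zero fun g hgG => ?_
  have hgT : g ∈ T := by
    rw [← hG]
    exact Submodule.subset_span hgG
  have hgsplit : f g • g
      = ∑ m ∈ (DirectSum.decompose ℳ g).support, f g • (DirectSum.decompose ℳ g m : N) := by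
    rw [← Finset.smul_sum, DirectSum.sum_support_decompose]
  rw [hgsplit]
  have hsplit2 : (DirectSum.decompose ℳ
        (∑ m ∈ (DirectSum.decompose ℳ g).support, f g • (DirectSum.decompose ℳ g m : N)) n : N)
      = ∑ m ∈ (DirectSum.decompose ℳ g).support,
          (DirectSum.decompose ℳ (f g • (DirectSum.decompose ℳ g m : N)) n : N) := by
    rw [DirectSum.decompose_sum, DFinsupp.finset_sum_apply, AddSubmonoidClass.coe_finset_sum]
  rw [hsplit2]
  refine Finset.sum_eq_zero fun m hm => ?_
  have hmD : m < D := by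
    have h1 : m ≤ (DirectSum.decompose ℳ g).support.sup id := Finset.le_sup (f := id) hm
    have h2 : (DirectSum.decompose ℳ g).support.sup id
        ≤ G.sup fun g => (DirectSum.decompose ℳ g).support.sup id :=
      Finset.le_sup (f := fun g => (DirectSum.decompose ℳ g).support.sup id) hgG
    omega
  have hn' : n = (n - m) + m := by omega
  rw [hn', proj_smul_right 𝒜 ℳ (f g) (SetLike.coe_mem _) (n - m)]
  have hθ : (DirectSum.decompose 𝒜 (f g) (n - m) : Z) ∈ posIdeal 𝒜 ^ k := by
    have h1 := proj_mem_pow hgen (f g) (n - m)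
    exact Ideal.pow_le_pow_right (by omega) h1
  exact hTkill _ (hTgrd g hgT m) _ hθ
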